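/- The first uncountable measurable cardinal α is inaccessible; in particular, β < α implies 2^β < α, and hence 2^{ℵ₀} < α. -/

import Mathlib

open Cardinal

/-- An ultrafilter `U` on `S` is `κ`-complete if every intersection of a family of members of
`U` indexed by a set of cardinality `< κ` is again a member of `U`. -/
def UltrafilterComplete {S : Type} (U : Ultrafilter S) (κ : Cardinal.{0}) : Prop :=
  ∀ (ι : Type) (A : ι → Set S), #ι < κ → (∀ i, A i ∈ U) → (⋂ i, A i) ∈ U

/-- A cardinal `α` is an (uncountable) measurable cardinal if it is uncountable and there is a
nonprincipal `α`-complete ultrafilter on a set of cardinality `α`. -/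
def IsMeasurableCard (α : Cardinal.{0}) : Prop :=
  Cardinal.aleph0 < α ∧
    ∃ U : Ultrafilter α.out, (∀ x : α.out, U ≠ pure x) ∧ UltrafilterComplete U α

section aux

variable {α : Cardinal.{0}} {U : Ultrafilter α.out}

/-- A set of cardinality `< α` is not in an `α`-complete nonprincipal ultrafilter. -/
lemma small_not_mem (hnp : ∀ x : α.out, U ≠ pure x) (hc : UltrafilterComplete U α)
    {A : Set α.out} (hA : #A < α) : A ∉ U := by
  intro hAU
  have hcompl : Aᶜ ∈ U := by
    have h : (⋂ a : A, ({(a : α.out)}ᶜ : Set α.out)) ∈ U := by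
      refine hc A (fun a => ({(a : α.out)}ᶜ : Set α.out)) hA fun a => ?_
      rw [Ultrafilter.compl_mem_iff_notMem]
      intro hs
      obtain ⟨x, hx, hxU⟩ := Ultrafilter.eq_pure_of_finite_mem (Set.finite_singleton _) hs
      exact hnp x hxU
    have : (⋂ a : A, ({(a : α.out)}ᶜ : Set α.out)) = Aᶜ := by
      ext x
      simp only [Set.mem_iInter, Set.mem_compl_iff, Set.mem_singleton_iff]
      constructor
      · intro h hxA; exact h ⟨x, hxA⟩ rfl
      · rintro h ⟨a, ha⟩ rfl; exact h ha
    rwa [this] at h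
  exact U.empty_notMem (by simpa using U.toFilter.inter_mem hAU hcompl)

end aux


/-!
STATEMENT 5. The first uncountable measurable cardinal `α` is inaccessible; in particular
`β < α` implies `2 ^ β < α`, and hence `2 ^ ℵ₀ < α`. -/
theorem stmt5 (α : Cardinal.{0}) (hα : IsMeasurableCard α)
    (hfirst : ∀ β : Cardinal.{0}, IsMeasurableCard β → α ≤ β) :
    α.IsInaccessible ∧ (∀ β : Cardinal.{0}, β < α → (2 : Cardinal) ^ β < α) ∧
      (2 : Cardinal) ^ Cardinal.aleph0 < α := by
  classical
  obtain ⟨huncount, U, hnp, hc⟩ := hα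
  have hmk : #α.out = α := mk_out α
  -- strong limit
  have hsl : ∀ β : Cardinal.{0}, β < α → (2 : Cardinal) ^ β < α := by
    intro β hβ
    by_contra hle
    push_neg at hle
    have hinj : Nonempty (α.out ↪ Set β.out) := by
      rw [← le_def, mk_set, mk_out, mk_out]; exact hle
    obtain ⟨f⟩ := hinj
    set B : β.out → Set α.out := fun i =>
      if {x | i ∈ f x} ∈ U then {x | i ∈ f x} else {x | i ∈ f x}ᶜ with hB
    have hBU : ∀ i, B i ∈ U := by
      intro i
      by_cases h : {x | i ∈ f x} ∈ U
      · simp only [hB]; rw [if_pos h]; exact h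
      · simpa [hB, h] using (Ultrafilter.compl_mem_iff_notMem.mpr h)
    have hmem : (⋂ i, B i) ∈ U := hc β.out B (by rw [mk_out]; exact hβ) hBU
    have hsmall : #(⋂ i, B i) < α := by
      refine lt_of_le_of_lt (mk_le_one_iff_set_subsingleton.mpr ?_)
        (lt_of_le_of_lt one_le_aleph0 huncount)
      intro x hx y hy
      refine f.injective (Set.ext fun i => ?_)
      have hx' := Set.mem_iInter.mp hx i
      have hy' := Set.mem_iInter.mp hy i
      by_cases h : {x | i ∈ f x} ∈ U <;> simp [hB, h] at hx' hy' <;>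
        simp [hx', hy']
    exact small_not_mem hnp hc hsmall hmem
  -- regularity
  have hreg : α ≤ α.ord.cof := by
    obtain ⟨r, wo, hr⟩ := ord_eq α.out
    rw [hmk] at hr
    haveI := wo
    letI : LinearOrder α.out := linearOrderOfSTO r
    haveI : WellFoundedLT α.out := ⟨wo.wf⟩
    have htr : Ordinal.type r = @Ordinal.type α.out (· < ·) inferInstance := rfl
    rw [hr, htr, Ordinal.cof_type, Order.le_cof_iff]
    intro T hT'
    have hT : ∀ a, ∃ b ∈ T, ¬ r b a := fun a =>
      let ⟨b, hb, hab⟩ := hT' a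
      ⟨b, hb, fun h => lt_irrefl a (lt_of_le_of_lt hab (show b < a from h))⟩
    by_contra hTα
    push_neg at hTα
    set A : T → Set α.out := fun t => {x | ¬ r (t : α.out) x} with hA
    have hAsmall : ∀ t : T, #(A t) < α := by
      intro t
      have : A t ⊆ {y | r y (t : α.out)} ∪ {(t : α.out)} := by
        intro x hx
        rcases trichotomous_of r x (t : α.out) with h | h | h
        · exact Or.inl h
        · exact Or.inr h
        · exact absurd h hx
      refine lt_of_le_of_lt (mk_le_mk_of_subset this) ?_
      refine lt_of_le_of_lt (mk_union_le _ _) ?_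
      have h1 : #{y | r y (t : α.out)} < α := by
        have h := Cardinal.card_typein_lt (r := r) (t : α.out) (by rw [hmk]; exact hr)
        rw [hmk] at h
        have he : #{y | r y (t : α.out)} = (Ordinal.typein r (t : α.out)).card := by
          exact Ordinal.card_typein _
        rwa [he]
      have h2 : #({(t : α.out)} : Set α.out) < α := by
        simp only [mk_fintype, Set.card_singleton, Nat.cast_one]
        exact lt_of_le_of_lt one_le_aleph0 huncount
      exact Cardinal.add_lt_of_lt (le_of_lt huncount) h1 h2
    have hcomplU : ∀ t : T, (A t)ᶜ ∈ U := fun t =>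
      Ultrafilter.compl_mem_iff_notMem.mpr (small_not_mem hnp hc (hAsmall t))
    have hmem : (⋂ t : T, (A t)ᶜ) ∈ U := hc T (fun t => (A t)ᶜ) hTα hcomplU
    have hempty : (⋂ t : T, (A t)ᶜ) = ∅ := by
      ext x
      simp only [Set.mem_iInter, Set.mem_compl_iff, Set.mem_empty_iff_false, iff_false, not_forall]
      obtain ⟨b, hbT, hb⟩ := hT x
      exact ⟨⟨b, hbT⟩, by simpa [hA] using hb⟩
    rw [hempty] at hmem
    exact U.empty_notMem hmem
  refine ⟨Cardinal.IsInaccessible.mk huncount hreg hsl, hsl, hsl _ huncount⟩
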